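/- For every integer n ≥ 4, (1/2)(log n)² − 0.257 ≤ ∑_{m=1}^{n} (log m)/m ≤ (1/2)(log n)² + 0.110. -/

import Mathlib

/-- The m-th triangular number. -/
def T (m : ℕ) : ℕ := m * (m + 1) / 2

/-- The pseudo-Smarandache function: the least positive m with n ∣ T m. -/
noncomputable def Z (n : ℕ) : ℕ := sInf {m : ℕ | 0 < m ∧ n ∣ T m}

section aux
open Real Set

lemma log32 : |Real.log 2 - Real.log 3 + 20111503/49601160| ≤ (1/118098 : ℝ) := by
  have h := Real.abs_log_sub_add_sum_range_le (x := 1/3) (by rw [abs_of_nonneg] <;> norm_num) 10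
  rw [show Real.log (1 - 1/3 : ℝ) = Real.log 2 - Real.log 3 by
    rw [show (1 - 1/3 : ℝ) = 2/3 by norm_num, Real.log_div (by norm_num) (by norm_num)]] at h
  rw [abs_of_nonneg (by norm_num : (0:ℝ) ≤ 1/3)] at h
  norm_num [Finset.sum_range_succ] at h
  rw [abs_le] at h ⊢
  constructor <;> [linarith [h.1]; linarith [h.2]]

lemma log3_lt : Real.log 3 < 1.09863 := by
  have h := log32
  rw [abs_le] at h
  have := Real.log_two_lt_d9
  norm_num at h ⊢
  linarith [h.1]

lemma log3_gt : 1.0986 < Real.log 3 := by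
  have h := log32
  rw [abs_le] at h
  have := Real.log_two_gt_d9
  norm_num at h ⊢
  linarith [h.2]

lemma anti (B : ℝ) : AntitoneOn (fun x : ℝ => Real.log x / x) (Set.Icc 3 B) := by
  have hc : ContinuousOn (fun x : ℝ => Real.log x / x) (Set.Icc 3 B) := by
    apply ContinuousOn.div (Real.continuousOn_log.mono ?_) continuousOn_id
    · intro x hx; have := hx.1; intro h; simp_all; linarith
    · intro x hx; simp; exact fun h => by have := hx.1; linarith [h ▸ hx.1]
  apply antitoneOn_of_deriv_nonpos (convex_Icc 3 B) hc
  · intro x hx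
    rw [interior_Icc] at hx
    have hx0 : x ≠ 0 := by have := hx.1; intro h; simp_all; linarith
    exact ((Real.differentiableAt_log hx0).div differentiableAt_fun_id hx0).differentiableWithinAt
  intro x hx
  rw [interior_Icc] at hx
  have hx3 : (3:ℝ) < x := hx.1
  have hx0 : x ≠ 0 := by linarith
  rw [deriv_fun_div (Real.differentiableAt_log hx0) differentiableAt_fun_id hx0]
  have hl : 1 ≤ Real.log x := by
    rw [Real.le_log_iff_exp_le (by linarith)]
    calc Real.exp 1 ≤ 2.7182818286 := Real.exp_one_lt_d9.le
    _ ≤ x := by linarith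
  rw [Real.deriv_log]
  have : x⁻¹ * x - Real.log x * 1 ≤ 0 := by
    rw [inv_mul_cancel₀ hx0]; simp; linarith
  apply div_nonpos_of_nonpos_of_nonneg
  · simpa using this
  · positivity

lemma integ (b : ℝ) (hb : 3 ≤ b) :
    ∫ x in (3:ℝ)..b, Real.log x / x = Real.log b ^ 2 / 2 - Real.log 3 ^ 2 / 2 := by
  have key : ∀ x ∈ Set.uIcc (3:ℝ) b, HasDerivAt (fun y => Real.log y ^ 2 / 2) (Real.log x / x) x := by
    intro x hx
    rw [Set.uIcc_of_le hb] at hx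
    have hx0 : x ≠ 0 := by intro h; rw [h] at hx; linarith [hx.1]
    have := ((Real.hasDerivAt_log hx0).pow 2).div_const 2
    refine this.congr_deriv ?_
    field_simp
    ring
  rw [intervalIntegral.integral_eq_sub_of_hasDerivAt key ?_]
  exact ((anti b).mono (by rw [Set.uIcc_of_le hb])).intervalIntegrable

theorem stmt_14 (n : ℕ) (hn : 4 ≤ n) :
    (1 / 2) * (Real.log n) ^ 2 - 0.257 ≤ ∑ m ∈ Finset.Icc 1 n, Real.log m / m ∧
    ∑ m ∈ Finset.Icc 1 n, Real.log m / m ≤ (1 / 2) * (Real.log n) ^ 2 + 0.110 := by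
  set f : ℝ → ℝ := fun x => Real.log x / x with hf
  have h3n : (3:ℕ) ≤ n := by omega
  have hanti : AntitoneOn f (Set.Icc (3:ℕ) (n:ℕ)) := by
    have := anti (n:ℝ); simpa using this
  have hIu := AntitoneOn.sum_le_integral_Ico h3n hanti
  have hIl := AntitoneOn.integral_le_sum_Ico h3n hanti
  have hint : ∫ x in ((3:ℕ):ℝ)..((n:ℕ):ℝ), f x = Real.log n ^ 2 / 2 - Real.log 3 ^ 2 / 2 := by
    have := integ (n:ℝ) (by exact_mod_cast h3n)
    simpa using this
  rw [hint] at hIu hIl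
  -- rewrite the shifted sum
  have hshift : (∑ i ∈ Finset.Ico 3 n, f ((i+1 : ℕ) : ℝ)) = ∑ m ∈ Finset.Ico 4 (n+1), f m := by
    exact Finset.sum_Ico_add' (fun m : ℕ => f m) 3 n 1
  rw [hshift] at hIu
  -- split the main sum
  have hsplit : (∑ m ∈ Finset.Icc 1 n, f m)
      = f 1 + f 2 + f 3 + ∑ m ∈ Finset.Ico 4 (n+1), f m := by
    rw [← Finset.Ico_add_one_right_eq_Icc, ← Finset.sum_Ico_consecutive _ (by omega : 1 ≤ 4) (by omega : 4 ≤ n+1)]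
    norm_num [Finset.sum_Ico_succ_top, show (1:ℕ) ≤ 2 by norm_num, show (1:ℕ) ≤ 3 by norm_num]
  have hIco3 : (∑ m ∈ Finset.Ico 3 n, f (m:ℝ)) ≤ ∑ m ∈ Finset.Ico 4 (n+1), f m + f 3 := by
    have : (∑ m ∈ Finset.Ico 3 (n+1), f (m:ℝ)) = f 3 + ∑ m ∈ Finset.Ico 4 (n+1), f m := by
      rw [← Finset.sum_Ico_consecutive _ (by omega : 3 ≤ 4) (by omega : 4 ≤ n+1)]
      norm_num [Finset.sum_Ico_succ_top, show (3:ℕ) ≤ 3 by norm_num]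
    have hmono : (∑ m ∈ Finset.Ico 3 n, f (m:ℝ)) ≤ ∑ m ∈ Finset.Ico 3 (n+1), f m := by
      apply Finset.sum_le_sum_of_subset_of_nonneg
      · apply Finset.Ico_subset_Ico le_rfl (by omega)
      · intro m hm _
        simp only [hf]
        apply div_nonneg (Real.log_nonneg ?_) (by positivity)
        have := (Finset.mem_Ico.1 hm).1
        exact_mod_cast by omega
    linarith
  have hf1 : f 1 = 0 := by simp [hf]
  have hf2 : f 2 = Real.log 2 / 2 := by norm_num [hf]
  have hf3 : f 3 = Real.log 3 / 3 := by norm_num [hf]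
  have hl2u := Real.log_two_lt_d9
  have hl2l := Real.log_two_gt_d9
  have hl3u := log3_lt
  have hl3l := log3_gt
  have hcast : (∑ m ∈ Finset.Icc 1 n, Real.log m / m) = ∑ m ∈ Finset.Icc 1 n, f m := rfl
  rw [hcast, hsplit, hf1, hf2, hf3]
  have hlog3pos : (0:ℝ) < Real.log 3 := by norm_num at hl3l ⊢; linarith
  constructor
  · nlinarith [hIl, hIco3, sq_nonneg (Real.log 3 - 1.0986)]
  · nlinarith [hIu, sq_nonneg (Real.log 3 - 1.0986)]

end aux
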